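/- Diagonal coefficient identity for the coupled σ-model action (Equation (3.30)). For every r ∈ {1, …, N} and for each choice of sign ±, the quantity c^±_{rr} := ±(ℓ^∞/8) φ^r_±(z_r)² Σ_{i∈I_±} φ_∓(ζ_i) / (φ_±'(ζ_i) (z_r−ζ_i)²) satisfies c^±_{rr} = (ℓ^∞/8) (φ^r_+'(z_r) φ^r_−(z_r) − φ^r_+(z_r) φ^r_−'(z_r)) = ρ_rr/2; in particular c^+_{rr} = c^−_{rr}. -/

import Mathlib

open scoped BigOperators
open Polynomial Finset

/-- One of the two "halves" `φ_±(w) = ∏_{i ∈ I} (w - ζ_i) / ∏_r (w - z_r)` of the twist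
function. -/
noncomputable def phiHalf {ι κ : Type*} [Fintype ι] [Fintype κ]
    (z : ι → ℂ) (ζ : κ → ℂ) (I : Finset κ) (w : ℂ) : ℂ :=
  (∏ i ∈ I, (w - ζ i)) / ∏ r, (w - z r)

/-- The function `φ^r_±(w) = (w - z_r) φ_±(w) = ∏_{i ∈ I} (w - ζ_i) / ∏_{s ≠ r} (w - z_s)`. -/
noncomputable def phiHalfR {ι κ : Type*} [Fintype ι] [DecidableEq ι] [Fintype κ]
    (z : ι → ℂ) (ζ : κ → ℂ) (I : Finset κ) (r : ι) (w : ℂ) : ℂ :=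
  (∏ i ∈ I, (w - ζ i)) / ∏ s ∈ Finset.univ.erase r, (w - z s)

/-- The coefficients `ρ_{rs}` of the coupled σ-model action (Equation (3.19)). -/
noncomputable def rhoCoef {ι κ : Type*} [Fintype ι] [DecidableEq ι] [Fintype κ]
    (linf : ℂ) (z : ι → ℂ) (ζ : κ → ℂ) (Ip Im : Finset κ) (r s : ι) : ℂ :=
  if r = s then
    linf / 4 * (deriv (phiHalfR z ζ Ip r) (z r) * phiHalfR z ζ Im r (z r)
      - phiHalfR z ζ Ip r (z r) * deriv (phiHalfR z ζ Im r) (z r))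
  else
    linf / 2 * phiHalfR z ζ Ip r (z r) * phiHalfR z ζ Im s (z s) / (z r - z s)


section Aux

lemma lemA' {κ : Type*} [DecidableEq κ] (ζ : κ → ℂ) (I J : Finset κ)
    (hinj : Set.InjOn ζ I) (hcard : I.card = J.card) (w : ℂ) (hw : ∀ i ∈ I, w ≠ ζ i) :
    eval w (derivative (Lagrange.nodal I ζ)) * eval w (Lagrange.nodal J ζ)
      - eval w (Lagrange.nodal I ζ) * eval w (derivative (Lagrange.nodal J ζ))
    = eval w (Lagrange.nodal I ζ) ^ 2 *
        ∑ i ∈ I, eval (ζ i) (Lagrange.nodal J ζ) /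
          (eval (ζ i) (derivative (Lagrange.nodal I ζ)) * (w - ζ i) ^ 2) := by
  set P := Lagrange.nodal I ζ with hP
  set Q := Lagrange.nodal J ζ with hQ
  -- degree bound
  have hdeg : (Q - P).degree < (I.card : WithBot ℕ) := by
    have h1 := Polynomial.degree_sub_lt (p := Q) (q := P)
      (by rw [hP, hQ, Lagrange.degree_nodal, Lagrange.degree_nodal, hcard])
      Lagrange.nodal_ne_zero
      (by rw [hP, hQ, Lagrange.nodal_monic.leadingCoeff, Lagrange.nodal_monic.leadingCoeff])
    rwa [hQ, Lagrange.degree_nodal, ← hcard] at h1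
  have hD := Lagrange.eq_interpolate (f := Q - P) hinj (by exact_mod_cast hdeg)
  rw [Lagrange.interpolate_apply] at hD
  have hbasis : ∀ i, Lagrange.basis I ζ i
      = C (Lagrange.nodalWeight I ζ i) * Lagrange.nodal (I.erase i) ζ := by
    intro i
    simp_rw [Lagrange.basis, Lagrange.basisDivisor, Finset.prod_mul_distrib,
      Lagrange.nodalWeight, map_prod, Lagrange.nodal]
  replace hD : Q - P = ∑ i ∈ I,
      C (eval (ζ i) Q * Lagrange.nodalWeight I ζ i) * Lagrange.nodal (I.erase i) ζ := by
    rw [hD]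
    refine sum_congr rfl fun i hi => ?_
    rw [hbasis i, eval_sub, hP, Lagrange.eval_nodal_at_node hi, sub_zero, map_mul, mul_assoc]
  have hwr : ∀ i ∈ I, derivative P * Lagrange.nodal (I.erase i) ζ
      - P * derivative (Lagrange.nodal (I.erase i) ζ)
      = (Lagrange.nodal (I.erase i) ζ)^2 := by
    intro i hi
    conv_lhs => rw [hP, Lagrange.nodal_eq_mul_nodal_erase hi]
    rw [derivative_mul, derivative_X_sub_C]
    ring
  have hNw : ∀ i ∈ I, eval w (Lagrange.nodal (I.erase i) ζ) = eval w P / (w - ζ i) := by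
    intro i hi
    have hne : w - ζ i ≠ 0 := sub_ne_zero.mpr (hw i hi)
    rw [eq_div_iff hne, hP, Lagrange.nodal_eq_mul_nodal_erase hi, eval_mul, eval_sub, eval_X,
      eval_C, mul_comm]
  calc eval w (derivative P) * eval w Q - eval w P * eval w (derivative Q)
      = eval w (derivative P * (Q - P) - P * derivative (Q - P)) := by
        simp only [derivative_sub, eval_sub, eval_mul]; ring
    _ = eval w (∑ i ∈ I, C (eval (ζ i) Q * Lagrange.nodalWeight I ζ i)
          * (Lagrange.nodal (I.erase i) ζ)^2) := by
        rw [hD, derivative_sum]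
        simp_rw [derivative_C_mul, Finset.mul_sum, ← Finset.sum_sub_distrib]
        refine congrArg (eval w) (Finset.sum_congr rfl fun i hi => ?_)
        rw [← hwr i hi]; ring
    _ = ∑ i ∈ I, (eval (ζ i) Q * Lagrange.nodalWeight I ζ i)
          * (eval w (Lagrange.nodal (I.erase i) ζ))^2 := by
        rw [eval_finset_sum]; simp [eval_mul, eval_pow]
    _ = eval w P ^ 2 * ∑ i ∈ I, eval (ζ i) Q /
          (eval (ζ i) (derivative P) * (w - ζ i) ^ 2) := by
        rw [Finset.mul_sum]
        refine Finset.sum_congr rfl fun i hi => ?_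
        rw [hNw i hi, Lagrange.nodalWeight_eq_eval_derivative_nodal hi]
        generalize w - ζ i = u
        simp only [div_pow, div_eq_mul_inv, mul_inv]
        ring

lemma derivEvalDiv (p q : Polynomial ℂ) (x : ℂ) (hq : q.eval x ≠ 0) :
    deriv (fun w => p.eval w / q.eval w) x
      = ((derivative p).eval x * q.eval x - p.eval x * (derivative q).eval x) / (q.eval x)^2 := by
  rw [deriv_fun_div (Polynomial.differentiableAt p) (Polynomial.differentiableAt q) hq,
    Polynomial.deriv, Polynomial.deriv]

lemma algA (X a q : ℂ) (ha : a ≠ 0) : (a/q)^2 * (X/a^2) = X/q^2 := by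
  rw [div_pow, div_mul_div_comm, mul_comm (a^2) X]
  exact mul_div_mul_right _ _ (pow_ne_zero 2 ha)

lemma algB (a a' b b' q q' : ℂ) (hq : q ≠ 0) :
    (a'*q - a*q')/q^2 * (b/q) - a/q * ((b'*q - b*q')/q^2) = (a'*b - a*b')/q^2 := by
  field_simp
  ring

lemma divAux {a b c d : ℂ} (hc : c ≠ 0) : (a / c) / ((b / c) * d) = a / (b * d) := by
  rw [div_div, show c * (b / c * d) = (c * (b / c)) * d by ring, mul_div_cancel₀ _ hc]

end Aux

/-- **Diagonal coefficient identity for the coupled σ-model action** (Equation (3.30)):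
for every `r` and each choice of sign,
`c^±_{rr} := ±(ℓ^∞/8) φ^r_±(z_r)² Σ_{i∈I_±} φ_∓(ζ_i)/(φ_±'(ζ_i)(z_r-ζ_i)²)`
equals `(ℓ^∞/8)(φ^r_+'(z_r) φ^r_-(z_r) - φ^r_+(z_r) φ^r_-'(z_r)) = ρ_{rr}/2`;
in particular `c^+_{rr} = c^-_{rr}`. -/
theorem diagonal_coefficient_identity
    {N : ℕ} (hN : 1 ≤ N)
    (z : Fin N → ℂ) (ζ : Fin (2 * N) → ℂ)
    (hdist : Function.Injective (Sum.elim z ζ : Fin N ⊕ Fin (2 * N) → ℂ))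
    (Ip Im : Finset (Fin (2 * N)))
    (hdisj : Disjoint Ip Im) (hunion : Ip ∪ Im = Finset.univ)
    (hIp : Ip.card = N) (hIm : Im.card = N)
    (linf : ℂ)
    (r : Fin N) :
    linf / 8 * phiHalfR z ζ Ip r (z r) ^ 2 *
        ∑ i ∈ Ip, phiHalf z ζ Im (ζ i) /
          (deriv (phiHalf z ζ Ip) (ζ i) * (z r - ζ i) ^ 2)
      = linf / 8 * (deriv (phiHalfR z ζ Ip r) (z r) * phiHalfR z ζ Im r (z r)
          - phiHalfR z ζ Ip r (z r) * deriv (phiHalfR z ζ Im r) (z r)) ∧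
    -(linf / 8) * phiHalfR z ζ Im r (z r) ^ 2 *
        ∑ i ∈ Im, phiHalf z ζ Ip (ζ i) /
          (deriv (phiHalf z ζ Im) (ζ i) * (z r - ζ i) ^ 2)
      = linf / 8 * (deriv (phiHalfR z ζ Ip r) (z r) * phiHalfR z ζ Im r (z r)
          - phiHalfR z ζ Ip r (z r) * deriv (phiHalfR z ζ Im r) (z r)) ∧
    linf / 8 * (deriv (phiHalfR z ζ Ip r) (z r) * phiHalfR z ζ Im r (z r)
          - phiHalfR z ζ Ip r (z r) * deriv (phiHalfR z ζ Im r) (z r))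
      = rhoCoef linf z ζ Ip Im r r / 2 := by
  classical
  have hz : Function.Injective z := fun a b hab => by
    have := hdist (a₁ := Sum.inl a) (a₂ := Sum.inl b) (by simpa using hab)
    simpa using this
  have hζ : Function.Injective ζ := fun a b hab => by
    have := hdist (a₁ := Sum.inr a) (a₂ := Sum.inr b) (by simpa using hab)
    simpa using this
  have hzζ : ∀ s i, z s ≠ ζ i := fun s i h => by
    have := hdist (a₁ := Sum.inl s) (a₂ := Sum.inr i) (by simpa using h)
    simp at this
  -- polynomial rewriting of the functions
  have hphi : ∀ I : Finset (Fin (2 * N)), phiHalf z ζ I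
      = fun w => eval w (Lagrange.nodal I ζ) / eval w (Lagrange.nodal Finset.univ z) := by
    intro I; funext w; simp [phiHalf, Lagrange.eval_nodal]
  have hphiR : ∀ I : Finset (Fin (2 * N)), phiHalfR z ζ I r
      = fun w => eval w (Lagrange.nodal I ζ) / eval w (Lagrange.nodal (Finset.univ.erase r) z) := by
    intro I; funext w; simp [phiHalfR, Lagrange.eval_nodal]
  have hQr_ne : eval (z r) (Lagrange.nodal (Finset.univ.erase r) z) ≠ 0 :=
    Lagrange.eval_nodal_not_at_node fun s hs h => (Finset.mem_erase.mp hs).1 (hz h).symm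
  have hQf_ne : ∀ i, eval (ζ i) (Lagrange.nodal (Finset.univ : Finset (Fin N)) z) ≠ 0 :=
    fun i => Lagrange.eval_nodal_not_at_node fun s _ h => hzζ s i h.symm
  have hderivR : ∀ I : Finset (Fin (2 * N)), deriv (phiHalfR z ζ I r) (z r)
      = ((derivative (Lagrange.nodal I ζ)).eval (z r)
            * eval (z r) (Lagrange.nodal (Finset.univ.erase r) z)
          - eval (z r) (Lagrange.nodal I ζ)
            * (derivative (Lagrange.nodal (Finset.univ.erase r) z)).eval (z r))
        / (eval (z r) (Lagrange.nodal (Finset.univ.erase r) z)) ^ 2 := by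
    intro I; rw [hphiR I]; exact derivEvalDiv _ _ _ hQr_ne
  have hderivP : ∀ (I : Finset (Fin (2 * N))) i, i ∈ I → deriv (phiHalf z ζ I) (ζ i)
      = (derivative (Lagrange.nodal I ζ)).eval (ζ i)
        / eval (ζ i) (Lagrange.nodal (Finset.univ : Finset (Fin N)) z) := by
    intro I i hi
    rw [hphi I, derivEvalDiv _ _ _ (hQf_ne i), Lagrange.eval_nodal_at_node hi, zero_mul, sub_zero,
      sq, ← div_div, mul_div_assoc, div_self (hQf_ne i), mul_one]
  -- term simplification inside sums
  have hterm : ∀ (I J : Finset (Fin (2 * N))), ∀ i ∈ I,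
      phiHalf z ζ J (ζ i) / (deriv (phiHalf z ζ I) (ζ i) * (z r - ζ i) ^ 2)
        = eval (ζ i) (Lagrange.nodal J ζ)
          / ((derivative (Lagrange.nodal I ζ)).eval (ζ i) * (z r - ζ i) ^ 2) := by
    intro I J i hi
    rw [hderivP I i hi, hphi J]
    exact divAux (hQf_ne i)
  have hIcards : Ip.card = Im.card := by rw [hIp, hIm]
  have hwp : ∀ i ∈ Ip, z r ≠ ζ i := fun i _ => hzζ r i
  have hwm : ∀ i ∈ Im, z r ≠ ζ i := fun i _ => hzζ r i
  have key1 := lemA' ζ Ip Im (hζ.injOn) hIcards (z r) hwp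
  have key2 := lemA' ζ Im Ip (hζ.injOn) hIcards.symm (z r) hwm
  have hPp_ne : eval (z r) (Lagrange.nodal Ip ζ) ≠ 0 :=
    Lagrange.eval_nodal_not_at_node fun i _ => hzζ r i
  have hPm_ne : eval (z r) (Lagrange.nodal Im ζ) ≠ 0 :=
    Lagrange.eval_nodal_not_at_node fun i _ => hzζ r i
  set a := eval (z r) (Lagrange.nodal Ip ζ)
  set a' := (derivative (Lagrange.nodal Ip ζ)).eval (z r)
  set b := eval (z r) (Lagrange.nodal Im ζ)
  set b' := (derivative (Lagrange.nodal Im ζ)).eval (z r)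
  set q := eval (z r) (Lagrange.nodal (Finset.univ.erase r) z)
  set q' := (derivative (Lagrange.nodal (Finset.univ.erase r) z)).eval (z r)
  have hS1 : (∑ i ∈ Ip, eval (ζ i) (Lagrange.nodal Im ζ)
        / ((derivative (Lagrange.nodal Ip ζ)).eval (ζ i) * (z r - ζ i) ^ 2))
      = (a' * b - a * b') / a ^ 2 := by
    rw [eq_div_iff (pow_ne_zero 2 hPp_ne)]
    linear_combination -key1
  have hS2 : (∑ i ∈ Im, eval (ζ i) (Lagrange.nodal Ip ζ)
        / ((derivative (Lagrange.nodal Im ζ)).eval (ζ i) * (z r - ζ i) ^ 2))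
      = (b' * a - b * a') / b ^ 2 := by
    rw [eq_div_iff (pow_ne_zero 2 hPm_ne)]
    linear_combination -key2
  refine ⟨?_, ?_, ?_⟩
  · rw [Finset.sum_congr rfl (hterm Ip Im), hS1, hderivR Ip, hderivR Im, hphiR Ip, hphiR Im]
    simp only
    rw [mul_assoc, algA _ _ _ hPp_ne, algB _ _ _ _ _ _ hQr_ne]
  · rw [Finset.sum_congr rfl (hterm Im Ip), hS2, hderivR Ip, hderivR Im, hphiR Ip, hphiR Im]
    simp only
    rw [mul_assoc, algA _ _ _ hPm_ne, algB _ _ _ _ _ _ hQr_ne]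
    ring
  · simp only [rhoCoef, eq_self_iff_true, if_true]
    ring
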